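/- For all integers a, b, c with 0 ≤ a, b, c ≤ 5, the triangle multigraph T_{a,b,c} on three vertices, whose three vertex pairs are joined by a, b, c parallel edges respectively, has weight w(T_{a,b,c}) = 2(a + b + c) − 14. -/

import Mathlib

open Finset

/-- A loopless multigraph on vertex type `V`, given by a symmetric multiplicity function. -/
structure Multigraph (V : Type*) where
  mult : V → V → ℕ
  symm : ∀ u v, mult u v = mult v u
  loopless : ∀ v, mult v v = 0

namespace Multigraph

variable {V W : Type*}

/-- The underlying simple graph (adjacency = positive multiplicity). -/
def toSimpleGraph (G : Multigraph V) : SimpleGraph V where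
  Adj u v := 0 < G.mult u v
  symm := by
    constructor
    intro u v h
    show 0 < G.mult v u
    rwa [G.symm v u]
  loopless := by
    constructor
    intro v h
    simp [G.loopless v] at h

/-- Connectivity of a multigraph. -/
def Connected (G : Multigraph V) : Prop := G.toSimpleGraph.Connected

/-- Number of edges `e(G)`. -/
def edgeCount (G : Multigraph V) [Fintype V] : ℕ := (∑ u, ∑ v, G.mult u v) / 2

/-- `d(X)`: the number of edges with exactly one endpoint in `X`. -/
def cut (G : Multigraph V) [Fintype V] [DecidableEq V] (X : Finset V) : ℕ :=
  ∑ u ∈ X, ∑ v ∈ Xᶜ, G.mult u v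

/-- Degree of a vertex (with multiplicity). -/
def degree (G : Multigraph V) [Fintype V] (v : V) : ℕ := ∑ u, G.mult v u

/-- Number of edges of `G` with both endpoints in `A` (edges of the induced subgraph `G[A]`). -/
def edgesWithin (G : Multigraph V) (A : Finset V) : ℕ :=
  (∑ u ∈ A, ∑ v ∈ A, G.mult u v) / 2

/-- Weight of a family of parts: `Σ d(A) − 10·t + 16`. -/
def partsWeight (G : Multigraph V) [Fintype V] [DecidableEq V]
    (Ps : Finset (Finset V)) : ℤ :=
  (∑ A ∈ Ps, (G.cut A : ℤ)) - 10 * Ps.card + 16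

/-- Weight `w_G(𝒫)` of a vertex partition `𝒫`. -/
def pweight (G : Multigraph V) [Fintype V] [DecidableEq V]
    (P : Finpartition (univ : Finset V)) : ℤ :=
  G.partsWeight P.parts

/-- Weight `w_{G[A]}(Q)` of a partition `Q` of `A` in the induced subgraph `G[A]`. -/
def inducedWeight (G : Multigraph V) [DecidableEq V] (A : Finset V)
    (Q : Finpartition A) : ℤ :=
  (∑ B ∈ Q.parts, ((∑ u ∈ B, ∑ v ∈ A \ B, G.mult u v : ℕ) : ℤ))
    - 10 * Q.parts.card + 16

/-- Isomorphism of multigraphs. -/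
def Iso (G : Multigraph V) (H : Multigraph W) : Prop :=
  ∃ e : V ≃ W, ∀ u v, H.mult (e u) (e v) = G.mult u v

/-- Contraction `G/𝒫`: identify each part to a single vertex and delete loops. -/
def contract (G : Multigraph V) [Fintype V] [DecidableEq V]
    (P : Finpartition (univ : Finset V)) : Multigraph {A // A ∈ P.parts} where
  mult A B := if A = B then 0 else ∑ u ∈ A.1, ∑ v ∈ B.1, G.mult u v
  symm := by
    intro A B
    try dsimp only
    by_cases h : A = B
    · simp [h]
    · rw [if_neg h, if_neg (Ne.symm h), Finset.sum_comm]
      exact Finset.sum_congr rfl fun b _ => Finset.sum_congr rfl fun a _ => G.symm a b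
  loopless := by intro A; simp

/-- Adding one new edge between distinct existing vertices. -/
def addEdge (G : Multigraph V) [DecidableEq V] (x y : V) (hxy : x ≠ y) : Multigraph V where
  mult u v := G.mult u v + (if (u = x ∧ v = y) ∨ (u = y ∧ v = x) then 1 else 0)
  symm := by
    intro u v
    try dsimp only
    rw [G.symm u v]
    by_cases h1 : (u = x ∧ v = y) ∨ (u = y ∧ v = x)
    · rw [if_pos h1, if_pos (by tauto)]
    · rw [if_neg h1, if_neg (by tauto)]
  loopless := by
    intro v
    try dsimp only
    have h : ¬((v = x ∧ v = y) ∨ (v = y ∧ v = x)) := by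
      rintro (⟨rfl, rfl⟩ | ⟨rfl, rfl⟩) <;> exact hxy rfl
    simp [h, G.loopless]

/-- `aK₂`: two vertices joined by `a` parallel edges. -/
def kTwo (a : ℕ) : Multigraph (Fin 2) where
  mult u v := if u = v then 0 else a
  symm := by
    intro u v
    try dsimp only
    by_cases h : u = v
    · subst h; rfl
    · rw [if_neg h, if_neg (Ne.symm h)]
  loopless := by intro v; simp

def triMult (a b c : ℕ) : ℕ → ℕ → ℕ
  | 0, 1 => a | 1, 0 => a
  | 0, 2 => b | 2, 0 => b
  | 1, 2 => c | 2, 1 => c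
  | _, _ => 0

/-- `T_{a,b,c}`: three vertices, the three pairs joined by `a`, `b`, `c` parallel edges. -/
def triangle (a b c : ℕ) : Multigraph (Fin 3) where
  mult u v := triMult a b c u.val v.val
  symm := by intro u v; fin_cases u <;> fin_cases v <;> rfl
  loopless := by intro v; fin_cases v <;> rfl

def w1Mult : ℕ → ℕ → ℕ
  | 0, 1 => 1 | 1, 0 => 1 | 0, 2 => 1 | 2, 0 => 1 | 1, 2 => 1 | 2, 1 => 1
  | 0, 3 => 3 | 3, 0 => 3 | 1, 3 => 3 | 3, 1 => 3 | 2, 3 => 3 | 3, 2 => 3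
  | _, _ => 0

/-- The 4-vertex, 12-edge planar multigraph `W₁`: a triangle of single edges whose
three vertices are each joined to a central vertex by triple edges. -/
def W1 : Multigraph (Fin 4) where
  mult u v := w1Mult u.val v.val
  symm := by decide
  loopless := by decide

def w2Mult : ℕ → ℕ → ℕ
  | 0, 1 => 3 | 1, 0 => 3
  | 0, 2 => 2 | 2, 0 => 2 | 0, 3 => 2 | 3, 0 => 2
  | 1, 2 => 2 | 2, 1 => 2 | 1, 3 => 2 | 3, 1 => 2
  | 2, 3 => 1 | 3, 2 => 1
  | _, _ => 0

/-- The 4-vertex, 12-edge planar multigraph `W₂`. -/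
def W2 : Multigraph (Fin 4) where
  mult u v := w2Mult u.val v.val
  symm := by decide
  loopless := by decide

def q4Mult (a1 a2 a3 a4 : ℕ) : ℕ → ℕ → ℕ
  | 0, 1 => a1 | 1, 0 => a1
  | 1, 2 => a2 | 2, 1 => a2
  | 2, 3 => a3 | 3, 2 => a3
  | 3, 0 => a4 | 0, 3 => a4
  | _, _ => 0

/-- `Q_{a₁,a₂,a₃,a₄}`: the 4-cycle with edge multiplicities `a₁,…,a₄`. -/
def Q4 (a1 a2 a3 a4 : ℕ) : Multigraph (Fin 4) where
  mult u v := q4Mult a1 a2 a3 a4 u.val v.val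
  symm := by intro u v; fin_cases u <;> fin_cases v <;> rfl
  loopless := by intro v; fin_cases v <;> rfl

/-- Membership (up to isomorphism) in `𝒩₅ = {2K₂, 3K₂, T₁,₃,₃, T₂,₂,₃, W₁, W₂}`. -/
def InN5 (G : Multigraph V) : Prop :=
  G.Iso (kTwo 2) ∨ G.Iso (kTwo 3) ∨ G.Iso (triangle 1 3 3) ∨
    G.Iso (triangle 2 2 3) ∨ G.Iso W1 ∨ G.Iso W2

/-- `𝒮₅`-contractibility: `G` is connected, `w(G) ≥ 0` (every partition with at least
two parts has nonnegative weight), and no contraction of `G` lies in `𝒩₅`. -/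
def S5Contractible (G : Multigraph V) [Fintype V] [DecidableEq V] : Prop :=
  G.Connected ∧
    (∀ P : Finpartition (univ : Finset V), 2 ≤ P.parts.card → 0 ≤ G.pweight P) ∧
    (∀ P : Finpartition (univ : Finset V), ¬ InN5 (G.contract P))

/-- Strong `ℤ_ℓ`-connectivity: every zero-sum boundary `β` admits a `β`-orientation.
An orientation is encoded as `o : V → V → ℕ` where `o u v` is the number of the
`G.mult u v` parallel edges between `u` and `v` that are oriented from `u` to `v`. -/
def StronglyZConnected (G : Multigraph V) [Fintype V] (l : ℕ) : Prop :=
  ∀ β : V → ZMod l, ∑ v, β v = 0 →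
    ∃ o : V → V → ℕ, (∀ u v, o u v + o v u = G.mult u v) ∧
      ∀ v, (∑ u, (o v u : ZMod l)) - (∑ u, (o u v : ZMod l)) = β v

end Multigraph

open Multigraph


set_option maxRecDepth 1000000
set_option synthInstance.maxSize 4000
set_option synthInstance.maxHeartbeats 1000000

private lemma classify_parts (S : Finset (Finset (Fin 3)))
    (h : (∀ x ∈ S, ∀ y ∈ S, x ≠ y → x ∩ y = ∅) ∧ S.sup id = univ ∧
      (⊥ : Finset (Fin 3)) ∉ S) :
    S = {{0},{1},{2}} ∨ S = {{0,1},{2}} ∨ S = {{0,2},{1}} ∨ S = {{1,2},{0}} ∨ S = {univ} := by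
  revert h; revert S; decide

private lemma pw0 (a b c : ℕ) :
    (triangle a b c).partsWeight {{0},{1},{2}} = 2*((a:ℤ)+b+c) - 14 := by
  have h0 : ({0}ᶜ : Finset (Fin 3)) = {1,2} := by decide
  have h1 : ({1}ᶜ : Finset (Fin 3)) = {0,2} := by decide
  have h2 : ({2}ᶜ : Finset (Fin 3)) = {0,1} := by decide
  simp [Multigraph.partsWeight, Multigraph.cut, h0, h1, h2, triangle, triMult]
  ring

private lemma pw1 (a b c : ℕ) :
    (triangle a b c).partsWeight {{0,1},{2}} = 2*((b:ℤ)+c) - 4 := by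
  have c1 : (triangle a b c).cut {0,1} = b + c := by
    have h : ({0,1}ᶜ : Finset (Fin 3)) = {2} := by decide
    simp [Multigraph.cut, h, Finset.sum_pair (by decide : (0:Fin 3) ≠ 1), triangle, triMult]
  have c2 : (triangle a b c).cut {2} = b + c := by
    have h : ({2}ᶜ : Finset (Fin 3)) = {0,1} := by decide
    simp [Multigraph.cut, h, Finset.sum_pair (by decide : (0:Fin 3) ≠ 1), triangle, triMult]
  rw [Multigraph.partsWeight,
    Finset.sum_pair (by decide : ({0,1} : Finset (Fin 3)) ≠ {2}), c1, c2,
    Finset.card_pair (by decide : ({0,1} : Finset (Fin 3)) ≠ {2})]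
  push_cast; ring

private lemma pw2 (a b c : ℕ) :
    (triangle a b c).partsWeight {{0,2},{1}} = 2*((a:ℤ)+c) - 4 := by
  have c1 : (triangle a b c).cut {0,2} = a + c := by
    have h : ({0,2}ᶜ : Finset (Fin 3)) = {1} := by decide
    simp [Multigraph.cut, h, Finset.sum_pair (by decide : (0:Fin 3) ≠ 2), triangle, triMult]
  have c2 : (triangle a b c).cut {1} = a + c := by
    have h : ({1}ᶜ : Finset (Fin 3)) = {0,2} := by decide
    simp [Multigraph.cut, h, Finset.sum_pair (by decide : (0:Fin 3) ≠ 2), triangle, triMult]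
  rw [Multigraph.partsWeight,
    Finset.sum_pair (by decide : ({0,2} : Finset (Fin 3)) ≠ {1}), c1, c2,
    Finset.card_pair (by decide : ({0,2} : Finset (Fin 3)) ≠ {1})]
  push_cast; ring

private lemma pw3 (a b c : ℕ) :
    (triangle a b c).partsWeight {{1,2},{0}} = 2*((a:ℤ)+b) - 4 := by
  have c1 : (triangle a b c).cut {1,2} = a + b := by
    have h : ({1,2}ᶜ : Finset (Fin 3)) = {0} := by decide
    simp [Multigraph.cut, h, Finset.sum_pair (by decide : (1:Fin 3) ≠ 2), triangle, triMult]
  have c2 : (triangle a b c).cut {0} = a + b := by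
    have h : ({0}ᶜ : Finset (Fin 3)) = {1,2} := by decide
    simp [Multigraph.cut, h, Finset.sum_pair (by decide : (1:Fin 3) ≠ 2), triangle, triMult]
  rw [Multigraph.partsWeight,
    Finset.sum_pair (by decide : ({1,2} : Finset (Fin 3)) ≠ {0}), c1, c2,
    Finset.card_pair (by decide : ({1,2} : Finset (Fin 3)) ≠ {0})]
  push_cast; ring

private def discrete3 : Finpartition (univ : Finset (Fin 3)) where
  parts := {{0},{1},{2}}
  supIndep := by
    rw [Finset.supIndep_iff_pairwiseDisjoint]
    intro x hx y hy hxy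
    simp only [Finset.coe_insert, Set.mem_insert_iff, Finset.coe_singleton,
      Set.mem_singleton_iff] at hx hy
    simp only [Function.onFun, id_eq, Finset.disjoint_left]
    rcases hx with rfl|rfl|rfl <;> rcases hy with rfl|rfl|rfl <;>
      first | exact absurd rfl hxy | decide
  sup_parts := by decide
  bot_notMem := by decide

/-- for `0 ≤ a, b, c ≤ 5`, `w(T_{a,b,c}) = 2(a+b+c) − 14`. -/
theorem weight_triangle (a b c : ℕ) (ha : a ≤ 5) (hb : b ≤ 5) (hc : c ≤ 5) :
    IsLeast {x : ℤ | ∃ P : Finpartition (univ : Finset (Fin 3)),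
      2 ≤ P.parts.card ∧ x = (triangle a b c).pweight P}
      (2 * ((a : ℤ) + b + c) - 14) := by
  constructor
  · exact ⟨discrete3, by decide, by
      show _ = (triangle a b c).partsWeight discrete3.parts
      rw [show discrete3.parts = {{0},{1},{2}} from rfl, pw0]⟩
  · rintro x ⟨P, hcard, rfl⟩
    have hd : ∀ u ∈ P.parts, ∀ v ∈ P.parts, u ≠ v → u ∩ v = ∅ := by
      intro u hu v hv huv
      exact Finset.disjoint_iff_inter_eq_empty.mp
        (P.supIndep.pairwiseDisjoint hu hv huv)
    have ha' : (a:ℤ) ≤ 5 := by exact_mod_cast ha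
    have hb' : (b:ℤ) ≤ 5 := by exact_mod_cast hb
    have hc' : (c:ℤ) ≤ 5 := by exact_mod_cast hc
    have hcls := classify_parts P.parts ⟨hd, P.sup_parts, P.bot_notMem⟩
    show _ ≤ (triangle a b c).partsWeight P.parts
    rcases hcls with h|h|h|h|h <;> rw [h]
    · rw [pw0]
    · rw [pw1]; linarith
    · rw [pw2]; linarith
    · rw [pw3]; linarith
    · exfalso; rw [h] at hcard; simp at hcard
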